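/- Fix counts n₁, n₂ ≥ 1. There exists Δ ∈ (0,1] such that, letting θ₁ be the two-armed Gaussian instance with means (Δ, 0) and θ₂ the one with means (−Δ, 0) (both with unit-variance rewards), every algorithm A satisfies (1/2) R(A,θ₁) + (1/2) R(A,θ₂) ≥ 1/(13 √n₁). -/

import Mathlib

open MeasureTheory ProbabilityTheory Real

noncomputable section

/-- The data space: `n i` i.i.d. real observations for each arm `i`. -/
abbrev Data {k : ℕ} (n : Fin k → ℕ) : Type := ∀ i : Fin k, Fin (n i) → ℝ

/-- The law of the data when arm `i`'s rewards have distribution `P i`. -/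
def dataMeasure {k : ℕ} (n : Fin k → ℕ) (P : Fin k → Measure ℝ) : Measure (Data n) :=
  Measure.pi fun i => Measure.pi fun _ : Fin (n i) => P i

/-- A bandit instance: each `P i` is a probability measure on `ℝ` with mean
`μ i ∈ [0,1]` that is 1-subgaussian. -/
structure IsBanditInstance {k : ℕ} (P : Fin k → Measure ℝ) (μ : Fin k → ℝ) : Prop where
  prob : ∀ i, IsProbabilityMeasure (P i)
  mean_mem : ∀ i, μ i ∈ Set.Icc (0 : ℝ) 1
  mean_eq : ∀ i, (∫ x, x ∂ P i) = μ i
  subgaussian : ∀ i, ∀ l : ℝ, (∫ x, Real.exp (l * (x - μ i)) ∂ P i) ≤ Real.exp (l ^ 2 / 2)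

/-- Simple regret of algorithm `A` on the instance `(P, μ)` with counts `n`. -/
def simpleRegret {k : ℕ} (n : Fin k → ℕ) (P : Fin k → Measure ℝ) (μ : Fin k → ℝ)
    (A : Data n → Fin k) : ℝ :=
  (⨆ i, μ i) - ∫ x, μ (A x) ∂ dataMeasure n P

/-- Sample mean of arm `i`. -/
def sampleMean {k : ℕ} (n : Fin k → ℕ) (x : Data n) (i : Fin k) : ℝ :=
  (∑ j, x i j) / (n i : ℝ)

open scoped ENNReal NNReal

namespace TwoInstanceAux

lemma gpdf_mul_exp (m t x : ℝ) :
    gaussianPDFReal m 1 x * rexp (t * x)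
      = rexp (t * m + t ^ 2 / 2) * gaussianPDFReal (m + t) 1 x := by
  simp only [gaussianPDFReal, NNReal.coe_one, mul_one]
  rw [mul_assoc, ← Real.exp_add, ← mul_assoc, mul_comm (rexp _), mul_assoc, ← Real.exp_add]
  congr 2
  ring

lemma gaussianReal_withDensity_exp (m t : ℝ) :
    (gaussianReal m 1).withDensity (fun x => ENNReal.ofReal (rexp (t * x)))
      = ENNReal.ofReal (rexp (t * m + t ^ 2 / 2)) • gaussianReal (m + t) 1 := by
  rw [gaussianReal_of_var_ne_zero _ one_ne_zero, gaussianReal_of_var_ne_zero _ one_ne_zero,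
    ← withDensity_mul _ (measurable_gaussianPDF _ _)
      (by fun_prop : Measurable fun x : ℝ => ENNReal.ofReal (rexp (t * x))),
    ← withDensity_smul _ (measurable_gaussianPDF _ _)]
  congr 1
  funext x
  simp only [Pi.mul_apply, Pi.smul_apply, smul_eq_mul, gaussianPDF]
  rw [← ENNReal.ofReal_mul (gaussianPDFReal_nonneg _ _ _), gpdf_mul_exp,
    ENNReal.ofReal_mul (Real.exp_nonneg _)]

lemma gaussianReal_tilt (m t : ℝ) (h : t * m + t ^ 2 / 2 = 0) :
    (gaussianReal m 1).withDensity (fun x => ENNReal.ofReal (rexp (t * x)))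
      = gaussianReal (m + t) 1 := by
  rw [gaussianReal_withDensity_exp, h]
  simp

lemma lintegral_exp_gaussian (m t : ℝ) :
    ∫⁻ x, ENNReal.ofReal (rexp (t * x)) ∂gaussianReal m 1
      = ENNReal.ofReal (rexp (t * m + t ^ 2 / 2)) := by
  have h1 : ∫⁻ x, ENNReal.ofReal (rexp (t * x)) ∂gaussianReal m 1
      = ((gaussianReal m 1).withDensity (fun x => ENNReal.ofReal (rexp (t * x)))) Set.univ := by
    rw [withDensity_apply _ MeasurableSet.univ, setLIntegral_univ]
  rw [h1, gaussianReal_withDensity_exp]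
  simp [measure_univ]

lemma lintegral_pi_prod : ∀ {n : ℕ} {E : Fin n → Type} [∀ i, MeasurableSpace (E i)]
    (μ : ∀ i, Measure (E i)) [∀ i, SigmaFinite (μ i)]
    (f : ∀ i, E i → ℝ≥0∞), (∀ i, Measurable (f i)) →
    ∫⁻ x, ∏ i, f i (x i) ∂Measure.pi μ = ∏ i, ∫⁻ y, f i y ∂(μ i) := by
  intro n
  induction n with
  | zero =>
    intro E _ μ _ f hf
    simp [lintegral_const, Measure.pi_univ]
  | succ n ih =>
    intro E _ μ _ f hf
    have hmp := measurePreserving_piFinSuccAbove μ 0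
    have hg : Measurable fun y : ∀ j : Fin n, E ((0 : Fin (n+1)).succAbove j) =>
        ∏ j, f ((0 : Fin (n+1)).succAbove j) (y j) :=
      Finset.measurable_prod _ fun j _ => (hf _).comp (measurable_pi_apply _)
    have hmeas : Measurable fun p : E 0 × ∀ j : Fin n, E ((0 : Fin (n+1)).succAbove j) =>
        f 0 p.1 * ∏ j, f ((0 : Fin (n+1)).succAbove j) (p.2 j) :=
      ((hf 0).comp measurable_fst).mul (hg.comp measurable_snd)
    calc ∫⁻ x, ∏ i, f i (x i) ∂Measure.pi μ
        = ∫⁻ p, f 0 p.1 * ∏ j, f ((0 : Fin (n+1)).succAbove j) (p.2 j)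
            ∂((μ 0).prod (Measure.pi fun j => μ ((0 : Fin (n+1)).succAbove j))) := by
          rw [← hmp.lintegral_comp hmeas]
          refine lintegral_congr fun x => ?_
          simp only [MeasurableEquiv.piFinSuccAbove_apply]
          rw [Fin.prod_univ_succAbove (fun i => f i (x i)) 0]
          rfl
      _ = (∫⁻ y, f 0 y ∂μ 0) * ∏ j, ∫⁻ y, f ((0 : Fin (n+1)).succAbove j) y
            ∂μ ((0 : Fin (n+1)).succAbove j) := by
          rw [lintegral_prod_mul (hf 0).aemeasurable hg.aemeasurable,
            ih _ _ fun j => hf _]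
      _ = ∏ i, ∫⁻ y, f i y ∂μ i :=
          (Fin.prod_univ_succAbove (fun i => ∫⁻ y, f i y ∂μ i) 0).symm

lemma pi_withDensity {n : ℕ} {E : Fin n → Type} [∀ i, MeasurableSpace (E i)]
    (μ : ∀ i, Measure (E i)) [∀ i, SigmaFinite (μ i)]
    (f : ∀ i, E i → ℝ≥0∞) (hf : ∀ i, Measurable (f i))
    [∀ i, SigmaFinite ((μ i).withDensity (f i))] :
    Measure.pi (fun i => (μ i).withDensity (f i))
      = (Measure.pi μ).withDensity (fun x => ∏ i, f i (x i)) := by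
  have key : ∀ s : ∀ i, Set (E i), (∀ i, MeasurableSet (s i)) →
      ((Measure.pi μ).withDensity fun x => ∏ i, f i (x i)) (Set.univ.pi s)
        = ∏ i, ((μ i).withDensity (f i)) (s i) := by
    intro s hs
    rw [withDensity_apply _ (MeasurableSet.univ_pi hs),
      ← lintegral_indicator (MeasurableSet.univ_pi hs) _]
    have hind : (Set.univ.pi s).indicator (fun x => ∏ i, f i (x i))
        = fun x => ∏ i, (s i).indicator (f i) (x i) := by
      funext x
      by_cases hx : x ∈ Set.univ.pi s
      · rw [Set.indicator_of_mem hx]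
        exact Finset.prod_congr rfl fun i _ =>
          (Set.indicator_of_mem (hx i (Set.mem_univ i)) _).symm
      · rw [Set.indicator_of_notMem hx]
        obtain ⟨i, hi⟩ : ∃ i, x i ∉ s i := by
          by_contra h
          push_neg at h
          exact hx fun i _ => h i
        exact (Finset.prod_eq_zero (Finset.mem_univ i) (Set.indicator_of_notMem hi _)).symm
    rw [hind, lintegral_pi_prod μ _ fun i => (hf i).indicator (hs i)]
    exact Finset.prod_congr rfl fun i _ => by
      rw [lintegral_indicator (hs i) _, ← withDensity_apply _ (hs i)]
  exact Measure.pi_eq key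

lemma dataMeasure_tilt {k : ℕ} (n : Fin k → ℕ) (m t : Fin k → ℝ)
    (h : ∀ i, t i * m i + t i ^ 2 / 2 = 0) :
    dataMeasure n (fun i => gaussianReal (m i + t i) 1)
      = (dataMeasure n (fun i => gaussianReal (m i) 1)).withDensity
          (fun x => ∏ i, ∏ j, ENNReal.ofReal (rexp (t i * x i j))) := by
  have hmeasf : ∀ i, Measurable fun y : Fin (n i) → ℝ =>
      ∏ j, ENNReal.ofReal (rexp (t i * y j)) :=
    fun i => Finset.measurable_prod _ fun j _ => by fun_prop
  have hinner : ∀ i, (Measure.pi fun _ : Fin (n i) => gaussianReal (m i + t i) 1)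
      = (Measure.pi fun _ : Fin (n i) => gaussianReal (m i) 1).withDensity
          (fun y => ∏ j, ENNReal.ofReal (rexp (t i * y j))) := by
    intro i
    haveI hsf : ∀ j : Fin (n i), SigmaFinite
        ((gaussianReal (m i) 1).withDensity fun x => ENNReal.ofReal (rexp (t i * x))) :=
      fun j => by rw [gaussianReal_tilt _ _ (h i)]; infer_instance
    calc (Measure.pi fun _ : Fin (n i) => gaussianReal (m i + t i) 1)
        = Measure.pi (fun _ : Fin (n i) =>
            (gaussianReal (m i) 1).withDensity fun x => ENNReal.ofReal (rexp (t i * x))) := by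
          refine congrArg Measure.pi (funext fun _ => ?_)
          rw [gaussianReal_tilt _ _ (h i)]
      _ = (Measure.pi fun _ : Fin (n i) => gaussianReal (m i) 1).withDensity
            (fun y => ∏ j, ENNReal.ofReal (rexp (t i * y j))) :=
          pi_withDensity _ _ (fun _ => by fun_prop)
  haveI hsf2 : ∀ i, SigmaFinite
      ((Measure.pi fun _ : Fin (n i) => gaussianReal (m i) 1).withDensity
        (fun y => ∏ j, ENNReal.ofReal (rexp (t i * y j)))) :=
    fun i => by rw [← hinner i]; infer_instance
  rw [dataMeasure, dataMeasure]
  calc (Measure.pi fun i => Measure.pi fun _ : Fin (n i) => gaussianReal (m i + t i) 1)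
      = Measure.pi (fun i => (Measure.pi fun _ : Fin (n i) => gaussianReal (m i) 1).withDensity
          (fun y => ∏ j, ENNReal.ofReal (rexp (t i * y j)))) :=
        congrArg Measure.pi (funext hinner)
    _ = (Measure.pi fun i => Measure.pi fun _ : Fin (n i) => gaussianReal (m i) 1).withDensity
          (fun x => ∏ i, ∏ j, ENNReal.ofReal (rexp (t i * x i j))) :=
        pi_withDensity _ _ hmeasf

lemma lintegral_dataMeasure_exp {k : ℕ} (n : Fin k → ℕ) (m t : Fin k → ℝ) :
    ∫⁻ x, ∏ i, ∏ j, ENNReal.ofReal (rexp (t i * x i j))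
        ∂dataMeasure n (fun i => gaussianReal (m i) 1)
      = ∏ i, ENNReal.ofReal (rexp (t i * m i + t i ^ 2 / 2)) ^ (n i) := by
  rw [dataMeasure]
  have houter := lintegral_pi_prod (E := fun i => Fin (n i) → ℝ)
    (fun i => Measure.pi fun _ : Fin (n i) => gaussianReal (m i) 1)
    (fun i y => ∏ j, ENNReal.ofReal (rexp (t i * y j)))
    (fun i => Finset.measurable_prod _ fun j _ => by fun_prop)
  refine houter.trans (Finset.prod_congr rfl fun i _ => ?_)
  have hin := lintegral_pi_prod (E := fun _ : Fin (n i) => ℝ)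
    (fun _ => gaussianReal (m i) 1)
    (fun _ y => ENNReal.ofReal (rexp (t i * y))) (fun _ => by fun_prop)
  rw [hin]
  simp [lintegral_exp_gaussian]

end TwoInstanceAux

set_option maxHeartbeats 1600000 in
/-- two-instance lemma for the `Ω(1/√n₁)` part of the minimax lower bound.
For counts `(n₁, n₂)` there is `Δ ∈ (0,1]` such that, with `θ₁` the two-armed Gaussian
instance with means `(Δ, 0)` and `θ₂` the one with means `(−Δ, 0)` (unit-variance rewards),
every algorithm has Bayesian regret at least `1/(13√n₁)` under the uniform prior on
`{θ₁, θ₂}`. -/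
theorem two_instance_lower_bound (n₁ n₂ : ℕ) (hn₁ : 1 ≤ n₁) (hn₂ : 1 ≤ n₂) :
    ∃ Δ : ℝ, Δ ∈ Set.Ioc (0 : ℝ) 1 ∧
      ∀ A : Data ![n₁, n₂] → Fin 2, Measurable A →
        1 / (13 * Real.sqrt (n₁ : ℝ)) ≤
          (1 / 2) * simpleRegret ![n₁, n₂]
              (fun i => gaussianReal (![Δ, 0] i) 1) ![Δ, 0] A +
            (1 / 2) * simpleRegret ![n₁, n₂]
              (fun i => gaussianReal (![-Δ, 0] i) 1) ![-Δ, 0] A := by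
  have hn₁pos : (0:ℝ) < (n₁:ℝ) := by exact_mod_cast Nat.lt_of_lt_of_le Nat.zero_lt_one hn₁
  have hspos : (0:ℝ) < Real.sqrt (n₁:ℝ) := Real.sqrt_pos.mpr hn₁pos
  have hsne : Real.sqrt (n₁:ℝ) ≠ 0 := ne_of_gt hspos
  have hs1 : 1 ≤ Real.sqrt (n₁:ℝ) := by
    rw [show (1:ℝ) = Real.sqrt 1 by simp]
    exact Real.sqrt_le_sqrt (by exact_mod_cast hn₁)
  set Δ : ℝ := 2 / (5 * Real.sqrt (n₁:ℝ)) with hΔdef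
  have hΔpos : 0 < Δ := by positivity
  have hΔ1 : Δ ≤ 1 := by
    rw [hΔdef, div_le_one (by positivity)]
    nlinarith
  have hss : Real.sqrt (n₁:ℝ) ^ 2 = (n₁:ℝ) := Real.sq_sqrt (le_of_lt hn₁pos)
  have hΔsq : (n₁:ℝ) * (4 * Δ ^ 2) = 16/25 := by
    have hΔ2 : Δ ^ 2 = 4 / (25 * (n₁:ℝ)) := by
      rw [hΔdef, div_pow, mul_pow, hss]; norm_num
    rw [hΔ2]; field_simp; ring
  refine ⟨Δ, ⟨hΔpos, hΔ1⟩, ?_⟩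
  intro A hA
  rw [simpleRegret, simpleRegret]
  set K : ℝ := rexp (16/25) with hKdef
  set D₁ := dataMeasure ![n₁, n₂] (fun i => gaussianReal (![Δ, 0] i) 1) with hD₁def
  set D₂ := dataMeasure ![n₁, n₂] (fun i => gaussianReal (![-Δ, 0] i) 1) with hD₂def
  haveI hP1 : IsProbabilityMeasure D₁ := by rw [hD₁def, dataMeasure]; infer_instance
  haveI hP2 : IsProbabilityMeasure D₂ := by rw [hD₂def, dataMeasure]; infer_instance
  set T : Set (Data ![n₁, n₂]) := A ⁻¹' {1} with hTdef
  have hT : MeasurableSet T := hA (measurableSet_singleton 1)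
  set R : Data ![n₁, n₂] → ℝ≥0∞ :=
    fun x => ∏ i, ∏ j, ENNReal.ofReal (rexp ((![-(2*Δ), 0] : Fin 2 → ℝ) i * x i j)) with hRdef
  have hRmeas : Measurable R :=
    Finset.measurable_prod _ fun i _ => Finset.measurable_prod _ fun j _ => by fun_prop
  -- change of measure
  have htilt : ∀ i : Fin 2,
      (![-(2*Δ), 0] : Fin 2 → ℝ) i * (![Δ, 0] : Fin 2 → ℝ) i
        + ((![-(2*Δ), 0] : Fin 2 → ℝ) i) ^ 2 / 2 = 0 := by
    intro i; fin_cases i <;> simp <;> ring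
  have hvec : (fun i : Fin 2 => gaussianReal ((![-Δ, 0] : Fin 2 → ℝ) i) 1)
      = fun i => gaussianReal ((![Δ, 0] : Fin 2 → ℝ) i + (![-(2*Δ), 0] : Fin 2 → ℝ) i) 1 := by
    funext i
    fin_cases i
    · norm_num
      congr 1
      ring
    · norm_num
  have hD2 : D₂ = D₁.withDensity R := by
    rw [hD₂def, hD₁def, hRdef, hvec]
    exact TwoInstanceAux.dataMeasure_tilt ![n₁, n₂] ![Δ, 0] ![-(2*Δ), 0] htilt
  -- Cauchy-Schwarz
  have hconj : Real.HolderConjugate 2 2 := Real.HolderConjugate.two_two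
  have hHolder := ENNReal.lintegral_mul_le_Lp_mul_Lq D₁ hconj
    ((measurable_one.indicator hT).aemeasurable) hRmeas.aemeasurable
  have hlhs : ∫⁻ a, (T.indicator (1 : Data ![n₁, n₂] → ℝ≥0∞) * R) a ∂D₁ = D₂ T := by
    have h1 : T.indicator (1 : Data ![n₁, n₂] → ℝ≥0∞) * R = T.indicator R := by
      funext a; by_cases ha : a ∈ T <;> simp [ha]
    rw [h1, lintegral_indicator hT, ← withDensity_apply _ hT, ← hD2]
  have hf2 : ∫⁻ a, (T.indicator (1 : Data ![n₁, n₂] → ℝ≥0∞)) a ^ (2:ℝ) ∂D₁ = D₁ T := by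
    have h1 : ∀ a, (T.indicator (1 : Data ![n₁, n₂] → ℝ≥0∞)) a ^ (2:ℝ)
        = T.indicator (1 : Data ![n₁, n₂] → ℝ≥0∞) a := by
      intro a; by_cases ha : a ∈ T <;>
        simp [ha, ENNReal.zero_rpow_of_pos (by norm_num : (0:ℝ) < 2)]
    simp_rw [h1]
    rw [lintegral_indicator hT]
    simp
  have hR2 : ∀ a, R a ^ (2:ℝ)
      = ∏ i, ∏ j, ENNReal.ofReal (rexp ((![-(4*Δ), 0] : Fin 2 → ℝ) i * a i j)) := by
    intro a
    rw [hRdef, show ((2:ℝ)) = ((2:ℕ):ℝ) by norm_num, ENNReal.rpow_natCast, ← Finset.prod_pow]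
    refine Finset.prod_congr rfl fun i _ => ?_
    rw [← Finset.prod_pow]
    refine Finset.prod_congr rfl fun j _ => ?_
    rw [pow_two, ← ENNReal.ofReal_mul (Real.exp_nonneg _), ← Real.exp_add]
    congr 1
    fin_cases i <;> simp <;> ring
  have hRint : ∫⁻ a, R a ^ (2:ℝ) ∂D₁ = ENNReal.ofReal K := by
    calc ∫⁻ a, R a ^ (2:ℝ) ∂D₁
        = ∫⁻ a, ∏ i, ∏ j, ENNReal.ofReal (rexp ((![-(4*Δ), 0] : Fin 2 → ℝ) i * a i j))
            ∂dataMeasure ![n₁, n₂] (fun i => gaussianReal ((![Δ, 0] : Fin 2 → ℝ) i) 1) := by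
          rw [← hD₁def]; exact lintegral_congr hR2
      _ = ∏ i, ENNReal.ofReal
            (rexp ((![-(4*Δ), 0] : Fin 2 → ℝ) i * (![Δ, 0] : Fin 2 → ℝ) i
              + ((![-(4*Δ), 0] : Fin 2 → ℝ) i) ^ 2 / 2)) ^ ((![n₁, n₂] : Fin 2 → ℕ) i) :=
          TwoInstanceAux.lintegral_dataMeasure_exp ![n₁, n₂] ![Δ, 0] ![-(4*Δ), 0]
      _ = ENNReal.ofReal K := by
          rw [Fin.prod_univ_two]
          simp only [Matrix.cons_val_zero, Matrix.cons_val_one, Matrix.head_cons]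
          rw [show (-(4*Δ) * Δ + (-(4*Δ))^2/2 : ℝ) = 4 * Δ^2 by ring]
          norm_num
          rw [← ENNReal.ofReal_pow (Real.exp_nonneg _), ← Real.exp_nat_mul, hΔsq]
  rw [hlhs, hf2, hRint] at hHolder
  -- to real numbers
  set p : ℝ := (D₁ T).toReal with hpdef
  set q : ℝ := (D₂ Tᶜ).toReal with hqdef
  have hKpos : 0 < K := Real.exp_pos _
  have hb : (D₂ T).toReal ≤ Real.sqrt p * Real.sqrt K := by
    have hrhs_ne : (D₁ T) ^ ((1:ℝ)/2) * (ENNReal.ofReal K) ^ ((1:ℝ)/2) ≠ ⊤ :=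
      ENNReal.mul_ne_top (ENNReal.rpow_ne_top_of_nonneg (by norm_num) (measure_ne_top _ _))
        (ENNReal.rpow_ne_top_of_nonneg (by norm_num) ENNReal.ofReal_ne_top)
    have h2 := ENNReal.toReal_mono hrhs_ne hHolder
    rwa [ENNReal.toReal_mul, ← ENNReal.toReal_rpow, ← ENNReal.toReal_rpow,
      ENNReal.toReal_ofReal (le_of_lt hKpos), ← Real.sqrt_eq_rpow, ← Real.sqrt_eq_rpow,
      ← hpdef] at h2
  have hsqK : Real.sqrt K ^ 2 = K := Real.sq_sqrt (le_of_lt hKpos)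
  have hsqp : Real.sqrt p ^ 2 = p := Real.sq_sqrt ENNReal.toReal_nonneg
  have hb2 : (D₂ T).toReal ≤ p + K / 4 := by
    nlinarith [sq_nonneg (Real.sqrt p - Real.sqrt K / 2), Real.sqrt_nonneg p, Real.sqrt_nonneg K]
  have hsum1 : (D₁ T).toReal + (D₁ Tᶜ).toReal = 1 := by
    rw [← ENNReal.toReal_add (measure_ne_top _ _) (measure_ne_top _ _),
      measure_add_measure_compl hT]
    simp
  have hsum2 : (D₂ T).toReal + (D₂ Tᶜ).toReal = 1 := by
    rw [← ENNReal.toReal_add (measure_ne_top _ _) (measure_ne_top _ _),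
      measure_add_measure_compl hT]
    simp
  -- bound on K
  have hK : K ≤ 625/289 := by
    have h8 : rexp (8/25) ≤ 25/17 := by
      have h := Real.add_one_le_exp (-(8/25) : ℝ)
      rw [Real.exp_neg] at h
      have hp8 := Real.exp_pos (8/25 : ℝ)
      have hinv := inv_mul_cancel₀ (ne_of_gt hp8)
      nlinarith [h, hp8, hinv]
    have hKsplit : K = rexp (8/25) * rexp (8/25) := by
      rw [hKdef, ← Real.exp_add]; norm_num
    nlinarith [Real.exp_pos (8/25 : ℝ)]
  -- regret identities
  have hsup1 : (⨆ i, (![Δ, 0] : Fin 2 → ℝ) i) = Δ := by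
    apply le_antisymm
    · refine ciSup_le fun i => ?_
      fin_cases i <;> simp [hΔpos.le]
    · simpa using le_ciSup (Set.finite_range (![Δ, 0] : Fin 2 → ℝ)).bddAbove 0
  have hsup2 : (⨆ i, (![-Δ, 0] : Fin 2 → ℝ) i) = 0 := by
    apply le_antisymm
    · refine ciSup_le fun i => ?_
      fin_cases i <;> simp [hΔpos.le]
    · simpa using le_ciSup (Set.finite_range (![-Δ, 0] : Fin 2 → ℝ)).bddAbove 1
  have hfin2 : ∀ v : Fin 2, (¬ v = 1) ↔ v = 0 := by decide
  have hfin2' : ∀ v : Fin 2, (¬ v = 0) → v = 1 := by decide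
  have hmem : ∀ x : Data ![n₁, n₂], x ∈ Tᶜ ↔ A x = 0 := by
    intro x
    simp only [hTdef, Set.mem_compl_iff, Set.mem_preimage, Set.mem_singleton_iff]
    exact hfin2 (A x)
  have hfun1 : (fun x => (![Δ, 0] : Fin 2 → ℝ) (A x)) = (Tᶜ).indicator (fun _ => Δ) := by
    funext x
    by_cases hx : A x = 0
    · rw [Set.indicator_of_mem ((hmem x).mpr hx), hx]
      simp
    · rw [Set.indicator_of_notMem (fun hc => hx ((hmem x).mp hc)), hfin2' _ hx]
      simp
  have hfun2 : (fun x => (![-Δ, 0] : Fin 2 → ℝ) (A x)) = (Tᶜ).indicator (fun _ => -Δ) := by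
    funext x
    by_cases hx : A x = 0
    · rw [Set.indicator_of_mem ((hmem x).mpr hx), hx]
      simp
    · rw [Set.indicator_of_notMem (fun hc => hx ((hmem x).mp hc)), hfin2' _ hx]
      simp
  have hint1 : ∫ x, (![Δ, 0] : Fin 2 → ℝ) (A x) ∂D₁ = (D₁ Tᶜ).toReal * Δ := by
    rw [hfun1, integral_indicator_const _ hT.compl, smul_eq_mul, measureReal_def]
  have hint2 : ∫ x, (![-Δ, 0] : Fin 2 → ℝ) (A x) ∂D₂ = (D₂ Tᶜ).toReal * (-Δ) := by
    rw [hfun2, integral_indicator_const _ hT.compl, smul_eq_mul, measureReal_def]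
  rw [hsup1, hsup2, hint1, hint2]
  have hc1 : (D₁ Tᶜ).toReal = 1 - p := by linarith [hpdef, hsum1]
  rw [hc1]
  have hq15 : 1 - (p + K/4) ≤ q := by
    have : (D₂ T).toReal = 1 - q := by linarith [hqdef, hsum2]
    linarith
  have hpq : 5/13 ≤ p + q := by nlinarith
  calc 1 / (13 * Real.sqrt (n₁:ℝ))
      = 2 / (5 * Real.sqrt (n₁:ℝ)) / 2 * (5/13) := by
        field_simp
    _ ≤ Δ / 2 * (p + q) := by
        rw [← hΔdef]
        exact mul_le_mul_of_nonneg_left hpq (by positivity)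
    _ = 1 / 2 * (Δ - (1 - p) * Δ) + 1 / 2 * (0 - q * (-Δ)) := by ring

end
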